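/- Let k ≥ 1 be an integer, let Y : ℝ → ℝ be differentiable, and let P : ℝ → (real symmetric n×n matrices) be differentiable (entrywise). Then the function t ↦ σ_k^∞(Y(t);P(t)) is differentiable, and its derivative equals σ_{k−1}^∞(Y(t);P(t))·Y′(t) + Σ_{j=0}^{k−1} ((−1)^j/(j+1))·σ_{k−1−j}^∞(Y(t);P(t))·(d/dt) trace(P(t)^{j+1}). -/

import Mathlib

/-- The `m`-th elementary symmetric polynomial of the eigenvalues of an `n × n` matrix `A`,
expressed via the appropriately signed coefficient of the characteristic polynomial of `A`
(so it is a polynomial function of the entries of `A`); `σ₀ = 1` and `σ_m = 0` for `m > n`. -/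
noncomputable def esymmMat {n : ℕ} (A : Matrix (Fin n) (Fin n) ℝ) (m : ℕ) : ℝ :=
  if m ≤ n then (-1 : ℝ) ^ m * (Matrix.charpoly A).coeff (n - m) else 0

/-- `σ_k^∞(μ₀;A) = ∑_{j=0}^k (μ₀^j/j!) σ_{k-j}(A)` for an `n × n` matrix `A`. -/
noncomputable def sigmaInfMat {n : ℕ} (μ₀ : ℝ) (A : Matrix (Fin n) (Fin n) ℝ) (k : ℕ) : ℝ :=
  ∑ j ∈ Finset.range (k + 1), μ₀ ^ j / (Nat.factorial j : ℝ) * esymmMat A (k - j)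

open Finset in
lemma newton_real {N : ℕ} (e : Fin N → ℝ) (k : ℕ) :
    (k : ℝ) * ∑ S ∈ powersetCard k univ, ∏ i ∈ S, e i
      = ∑ j ∈ range k, (-1 : ℝ) ^ j * (∑ x, e x ^ (j + 1))
          * ∑ S ∈ powersetCard (k - 1 - j) univ, ∏ i ∈ S, e i := by
  have h := congrArg (MvPolynomial.eval e) (MvPolynomial.mul_esymm_eq_sum (Fin N) ℝ k)
  simp only [MvPolynomial.esymm, MvPolynomial.psum, map_mul, map_sum, map_pow, map_prod,
    MvPolynomial.eval_X, map_natCast, map_neg, map_one, MvPolynomial.eval_pow,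
    MvPolynomial.eval_prod] at h
  rw [Finset.sum_filter, Finset.Nat.sum_antidiagonal_eq_sum_range_succ_mk,
    Finset.sum_range_succ] at h
  simp only [lt_self_iff_false, if_false, add_zero] at h
  rw [h, ← Finset.sum_range_reflect, Finset.mul_sum]
  refine Finset.sum_congr rfl fun j hj => ?_
  rw [Finset.mem_range] at hj
  have h2 : k - (k - 1 - j) = j + 1 := by omega
  rw [h2, if_pos (by omega : k - 1 - j < k)]
  have h3 : (-1 : ℝ) ^ (k + 1) * (-1) ^ (k - 1 - j) = (-1) ^ j := by
    rw [← pow_add, neg_one_pow_eq_pow_mod_two, neg_one_pow_eq_pow_mod_two (n := j)]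
    congr 1; omega
  rw [← h3]; ring

open Matrix Polynomial in
lemma charpoly_conj_aux {m : Type*} [Fintype m] [DecidableEq m] {R : Type*} [CommRing R]
    (U M V : Matrix m m R) (h : U * V = 1) :
    (U * M * V).charpoly = M.charpoly := by
  have key : charmatrix (U * M * V)
      = (C : R →+* R[X]).mapMatrix U * charmatrix M * (C : R →+* R[X]).mapMatrix V := by
    rw [charmatrix, charmatrix, mul_sub, sub_mul]
    congr 1
    · rw [← (Matrix.scalar_commute (n := m) X (fun r' => Commute.all X r')
        ((C : R →+* R[X]).mapMatrix U)).eq, mul_assoc, ← _root_.map_mul, h, _root_.map_one,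
        mul_one]
    · rw [← _root_.map_mul, ← _root_.map_mul]
  have hdet : ((C : R →+* R[X]).mapMatrix U).det * ((C : R →+* R[X]).mapMatrix V).det = 1 := by
    rw [← det_mul, ← _root_.map_mul, h, _root_.map_one, det_one]
  rw [charpoly, charpoly, key, det_mul, det_mul]
  rw [mul_comm, ← mul_assoc, mul_comm (((C : R →+* R[X]).mapMatrix V).det) _, hdet, one_mul]

open Matrix Polynomial in
lemma charpoly_hermitian {n : ℕ} {A : Matrix (Fin n) (Fin n) ℝ} (hA : A.IsHermitian) :
    A.charpoly = ∏ i, (X - C (hA.eigenvalues i)) := by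
  set U : Matrix (Fin n) (Fin n) ℝ := (hA.eigenvectorUnitary : Matrix (Fin n) (Fin n) ℝ) with hU
  have h1 : U * star U = 1 := (Matrix.mem_unitaryGroup_iff).mp hA.eigenvectorUnitary.2
  have hd : diagonal (RCLike.ofReal ∘ hA.eigenvalues) = diagonal hA.eigenvalues := rfl
  have hsp : A = U * diagonal hA.eigenvalues * star U := by
    rw [← hd]; exact hA.spectral_theorem
  have := congrArg Matrix.charpoly hsp
  rw [this, charpoly_conj_aux _ _ _ h1,
    Matrix.charpoly_of_upperTriangular _ (Matrix.blockTriangular_diagonal _)]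
  simp

open Matrix in
lemma trace_pow_hermitian {n : ℕ} {A : Matrix (Fin n) (Fin n) ℝ} (hA : A.IsHermitian) (i : ℕ) :
    (A ^ i).trace = ∑ x, hA.eigenvalues x ^ i := by
  set U : Matrix (Fin n) (Fin n) ℝ := (hA.eigenvectorUnitary : Matrix (Fin n) (Fin n) ℝ) with hU
  have h1 : U * star U = 1 := (Matrix.mem_unitaryGroup_iff).mp hA.eigenvectorUnitary.2
  have h2 : star U * U = 1 := (Matrix.mem_unitaryGroup_iff').mp hA.eigenvectorUnitary.2
  have hd : diagonal (RCLike.ofReal ∘ hA.eigenvalues) = diagonal hA.eigenvalues := rfl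
  have hsp : A = U * diagonal hA.eigenvalues * star U := by
    rw [← hd]; exact hA.spectral_theorem
  set D : Matrix (Fin n) (Fin n) ℝ := diagonal hA.eigenvalues with hD
  have hpow : A ^ i = U * D ^ i * star U := by
    induction i with
    | zero => simp [h1]
    | succ i ih =>
        calc A ^ (i + 1) = (U * D ^ i * star U) * A := by rw [pow_succ, ih]
        _ = (U * D ^ i * star U) * (U * D * star U) := congrArg _ hsp
        _ = U * D ^ (i + 1) * star U := by
            rw [pow_succ]
            calc (U * D ^ i * star U) * (U * D * star U)
                = U * D ^ i * (star U * U) * D * star U := by simp only [mul_assoc]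
              _ = U * (D ^ i * D) * star U := by rw [h2, mul_one]; simp only [mul_assoc]
  rw [hpow, Matrix.trace_mul_comm, ← mul_assoc, h2, one_mul, hD, Matrix.diagonal_pow,
    Matrix.trace_diagonal]
  simp

open Finset in
lemma esymmMat_eq {n : ℕ} {A : Matrix (Fin n) (Fin n) ℝ} (hA : A.IsHermitian) (m : ℕ) :
    esymmMat A m = ∑ S ∈ powersetCard m univ, ∏ i ∈ S, hA.eigenvalues i := by
  by_cases hm : m ≤ n
  · rw [esymmMat, if_pos hm, charpoly_hermitian hA]
    have hcard : Multiset.card (Finset.univ.val.map hA.eigenvalues) = n := by simp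
    have hv := Multiset.prod_X_sub_C_coeff (Finset.univ.val.map hA.eigenvalues)
      (k := n - m) (by rw [hcard]; omega)
    have hprod : (∏ i, (Polynomial.X - Polynomial.C (hA.eigenvalues i)))
        = ((Finset.univ.val.map hA.eigenvalues).map
            (fun t => Polynomial.X - Polynomial.C t)).prod := by
      rw [Multiset.map_map]; rfl
    rw [hprod, hv, hcard, show n - (n - m) = m from by omega, ← Finset.esymm_map_val,
      ← mul_assoc, ← pow_add]
    simp [neg_one_pow_eq_pow_mod_two]
  · rw [esymmMat, if_neg hm, Finset.powersetCard_eq_empty.mpr (by simp; omega),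
      Finset.sum_empty]

lemma isHermitian_of_isSymm {n : ℕ} {A : Matrix (Fin n) (Fin n) ℝ} (hA : A.IsSymm) :
    A.IsHermitian := by
  rwa [Matrix.IsHermitian, Matrix.conjTranspose_eq_transpose_of_trivial]

open Finset in
lemma newton_mat {n : ℕ} {A : Matrix (Fin n) (Fin n) ℝ} (hA : A.IsSymm) (k : ℕ) :
    (k : ℝ) * esymmMat A k
      = ∑ j ∈ range k, (-1 : ℝ) ^ j * (A ^ (j + 1)).trace * esymmMat A (k - 1 - j) := by
  have hH := isHermitian_of_isSymm hA
  simp only [esymmMat_eq hH, trace_pow_hermitian hH]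
  exact newton_real hH.eigenvalues k

open Finset in
lemma newton_sigmaInf {n : ℕ} {A : Matrix (Fin n) (Fin n) ℝ} (hA : A.IsSymm) (μ : ℝ) (m : ℕ) :
    ((m : ℝ) + 1) * sigmaInfMat μ A (m + 1)
      = μ * sigmaInfMat μ A m
        + ∑ j ∈ range (m + 1), (-1 : ℝ) ^ j * (A ^ (j + 1)).trace * sigmaInfMat μ A (m - j) := by
  rw [sigmaInfMat, Finset.mul_sum]
  have split : ∀ i ∈ range (m + 2),
      ((m : ℝ) + 1) * (μ ^ i / (Nat.factorial i : ℝ) * esymmMat A (m + 1 - i))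
        = (i : ℝ) * (μ ^ i / (Nat.factorial i : ℝ) * esymmMat A (m + 1 - i))
          + μ ^ i / (Nat.factorial i : ℝ)
            * (((m + 1 - i : ℕ) : ℝ) * esymmMat A (m + 1 - i)) := by
    intro i hi
    rw [Finset.mem_range] at hi
    have hc : ((m + 1 - i : ℕ) : ℝ) = (m : ℝ) + 1 - (i : ℝ) := by
      push_cast [Nat.cast_sub (by omega : i ≤ m + 1)]; ring
    rw [hc]; ring
  rw [Finset.sum_congr rfl split, Finset.sum_add_distrib]
  congr 1
  · rw [Finset.sum_range_succ']
    simp only [Nat.cast_zero, zero_mul, add_zero, sigmaInfMat, Finset.mul_sum]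
    refine Finset.sum_congr rfl fun i _ => ?_
    have hfac : ((Nat.factorial (i + 1) : ℕ) : ℝ) = ((i : ℝ) + 1) * (Nat.factorial i : ℝ) := by
      rw [Nat.factorial_succ]; push_cast; ring
    have hidx : m + 1 - (i + 1) = m - i := by omega
    rw [hidx, hfac]
    have h0 : (Nat.factorial i : ℝ) ≠ 0 := by
      exact_mod_cast Nat.factorial_pos i |>.ne'
    have h1 : ((i : ℝ) + 1) ≠ 0 := by positivity
    push_cast
    field_simp
    ring
  · have inner : ∀ i ∈ range (m + 2),
        μ ^ i / (Nat.factorial i : ℝ) * (((m + 1 - i : ℕ) : ℝ) * esymmMat A (m + 1 - i))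
          = ∑ j ∈ range (m + 1 - i), μ ^ i / (Nat.factorial i : ℝ)
              * ((-1 : ℝ) ^ j * (A ^ (j + 1)).trace * esymmMat A (m - i - j)) := by
      intro i hi
      rw [newton_mat hA (m + 1 - i), Finset.mul_sum]
      refine Finset.sum_congr rfl fun j hj => ?_
      rw [show m + 1 - i - 1 - j = m - i - j from by omega]
    rw [Finset.sum_congr rfl inner, Finset.sum_comm'
      (s' := fun j => range (m + 1 - j)) (t' := range (m + 1))
      (by intro x y; simp only [Finset.mem_range]; omega)]
    refine Finset.sum_congr rfl fun j hj => ?_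
    rw [Finset.mem_range] at hj
    rw [sigmaInfMat, Finset.mul_sum, show m - j + 1 = m + 1 - j from by omega]
    refine Finset.sum_congr rfl fun i hi => ?_
    rw [Finset.mem_range] at hi
    rw [show m - j - i = m - i - j from by omega]
    ring

open Finset in
lemma key_algebra (a τ τ' : ℕ → ℝ) (y y' : ℝ) (D : ℕ → ℝ)
    (hD : ∀ m, D m = a m * y'
      + ∑ j ∈ range (m + 1), (-1 : ℝ) ^ j / ((j : ℝ) + 1) * a (m - j) * τ' (j + 1))
    (hN : ∀ m : ℕ, ((m : ℝ) + 1) * a (m + 1)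
      = y * a m + ∑ j ∈ range (m + 1), (-1 : ℝ) ^ j * τ (j + 1) * a (m - j))
    (m : ℕ) :
    ((m : ℝ) + 1) * D m
      = y' * a m + y * (if m = 0 then 0 else D (m - 1))
        + ∑ j ∈ range (m + 1), (-1 : ℝ) ^ j
            * (τ' (j + 1) * a (m - j) + τ (j + 1) * (if m - j = 0 then 0 else D (m - j - 1))) := by
  rcases m with _ | m
  · simp [hD, Finset.sum_range_one]; ring
  · simp only [Nat.succ_ne_zero, if_false, Nat.add_sub_cancel]
    rw [Finset.sum_range_succ, if_pos (by omega : m + 1 - (m + 1) = 0), Nat.sub_self]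
    have hstep : ∀ j ∈ range (m + 1),
        (-1 : ℝ) ^ j * (τ' (j + 1) * a (m + 1 - j)
            + τ (j + 1) * (if m + 1 - j = 0 then 0 else D (m + 1 - j - 1)))
        = (-1 : ℝ) ^ j * τ' (j + 1) * a (m + 1 - j)
          + ((-1 : ℝ) ^ j * τ (j + 1) * a (m - j)) * y'
          + ∑ i ∈ range (m - j + 1),
              ((-1 : ℝ) ^ i / ((i : ℝ) + 1) * τ' (i + 1))
                * ((-1 : ℝ) ^ j * τ (j + 1) * a (m - j - i)) := by
      intro j hj
      rw [Finset.mem_range] at hj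
      rw [if_neg (by omega), show m + 1 - j - 1 = m - j from by omega, hD (m - j),
        mul_add, mul_add, mul_add, Finset.mul_sum, Finset.mul_sum, ← add_assoc]
      congr 1
      · ring
      · exact Finset.sum_congr rfl fun i _ => by ring
    rw [Finset.sum_congr rfl hstep, Finset.sum_add_distrib, Finset.sum_add_distrib,
      ← Finset.sum_mul]
    rw [Finset.sum_comm' (t' := range (m + 1)) (s' := fun i => range (m - i + 1))
      (by intro x y; simp only [Finset.mem_range]; omega)]
    have hinner : ∀ i ∈ range (m + 1),
        ∑ j ∈ range (m - i + 1),
            ((-1 : ℝ) ^ i / ((i : ℝ) + 1) * τ' (i + 1))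
              * ((-1 : ℝ) ^ j * τ (j + 1) * a (m - j - i))
        = ((-1 : ℝ) ^ i / ((i : ℝ) + 1) * τ' (i + 1))
            * ((((m - i : ℕ) : ℝ) + 1) * a (m - i + 1) - y * a (m - i)) := by
      intro i hi
      rw [Finset.mem_range] at hi
      rw [← Finset.mul_sum]
      congr 1
      have hsub : ∀ j ∈ range (m - i + 1),
          (-1 : ℝ) ^ j * τ (j + 1) * a (m - j - i)
            = (-1 : ℝ) ^ j * τ (j + 1) * a (m - i - j) := fun j _ => by
        rw [show m - j - i = m - i - j from by omega]
      rw [Finset.sum_congr rfl hsub]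
      linarith [hN (m - i)]
    rw [Finset.sum_congr rfl hinner]
    have hDm1 : D (m + 1) = a (m + 1) * y'
        + (∑ j ∈ range (m + 1), (-1 : ℝ) ^ j / ((j : ℝ) + 1) * a (m + 1 - j) * τ' (j + 1)
          + (-1 : ℝ) ^ (m + 1) / (((m + 1 : ℕ) : ℝ) + 1) * a 0 * τ' (m + 1 + 1)) := by
      rw [hD (m + 1), Finset.sum_range_succ, Nat.sub_self]
    rw [hDm1, hD m]
    have hcollect : ∑ x ∈ range (m + 1),
        ((((m : ℝ) + 1) + 1) * ((-1 : ℝ) ^ x / ((x : ℝ) + 1) * a (m + 1 - x) * τ' (x + 1)))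
        = ∑ x ∈ range (m + 1), ((-1 : ℝ) ^ x * τ' (x + 1) * a (m + 1 - x))
          + ∑ x ∈ range (m + 1), (y * ((-1 : ℝ) ^ x / ((x : ℝ) + 1) * a (m - x) * τ' (x + 1)))
          + ∑ x ∈ range (m + 1), (((-1 : ℝ) ^ x / ((x : ℝ) + 1) * τ' (x + 1))
              * ((((m - x : ℕ) : ℝ) + 1) * a (m - x + 1) - y * a (m - x))) := by
      rw [← Finset.sum_add_distrib, ← Finset.sum_add_distrib]
      refine Finset.sum_congr rfl fun i hi => ?_
      rw [Finset.mem_range] at hi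
      rw [show m - i + 1 = m + 1 - i from by omega,
        show ((m - i : ℕ) : ℝ) = (m : ℝ) - (i : ℝ) from by
          push_cast [Nat.cast_sub (by omega : i ≤ m)]; ring]
      have hi1 : ((i : ℝ) + 1) ≠ 0 := by positivity
      field_simp
      ring
    rw [← Finset.mul_sum, ← Finset.mul_sum] at hcollect
    have hlast : (((m : ℝ) + 1) + 1)
        * ((-1 : ℝ) ^ (m + 1) / (((m + 1 : ℕ) : ℝ) + 1) * a 0 * τ' (m + 1 + 1))
        = (-1 : ℝ) ^ (m + 1) * a 0 * τ' (m + 1 + 1) := by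
      have : (((m + 1 : ℕ) : ℝ) + 1) ≠ 0 := by positivity
      push_cast
      field_simp
    have hY := hN m
    push_cast at hcollect hlast hY ⊢
    linear_combination hcollect + hlast + y' * hY

lemma sigmaInfMat_zero {n : ℕ} (μ : ℝ) (A : Matrix (Fin n) (Fin n) ℝ) :
    sigmaInfMat μ A 0 = 1 := by
  have hcoeff : (Matrix.charpoly A).coeff n = 1 := by
    have hmon := Matrix.charpoly_monic A
    have hdeg : (Matrix.charpoly A).natDegree = n := by
      rw [Matrix.charpoly_natDegree_eq_dim, Fintype.card_fin]
    have h := hmon.coeff_natDegree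
    rwa [hdeg] at h
  simp [sigmaInfMat, esymmMat, hcoeff]

/-- If `Y : ℝ → ℝ` is differentiable and `P : ℝ → Sym(ℝⁿ)` is differentiable entrywise, then
`t ↦ σ_k^∞(Y(t);P(t))` is differentiable with derivative
`σ_{k-1}^∞(Y;P) Y' + ∑_{j=0}^{k-1} ((-1)^j/(j+1)) σ_{k-1-j}^∞(Y;P) (trace P^{j+1})'`. -/
theorem hasDerivAt_sigmaInfMat {n : ℕ} (k : ℕ) (hk : 1 ≤ k) (Y : ℝ → ℝ)
    (P : ℝ → Matrix (Fin n) (Fin n) ℝ) (hY : Differentiable ℝ Y)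
    (hsymm : ∀ t, (P t).IsSymm) (hP : ∀ i j, Differentiable ℝ fun t => P t i j) (t : ℝ) :
    HasDerivAt (fun s => sigmaInfMat (Y s) (P s) k)
      (sigmaInfMat (Y t) (P t) (k - 1) * deriv Y t
        + ∑ j ∈ Finset.range k, (-1 : ℝ) ^ j / ((j : ℝ) + 1) * sigmaInfMat (Y t) (P t) (k - 1 - j)
            * deriv (fun s => ((P s) ^ (j + 1)).trace) t) t := by
  classical
  -- differentiability of entries of powers
  have hPowEntry : ∀ i p q, Differentiable ℝ fun s => (P s ^ i) p q := by
    intro i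
    induction i with
    | zero =>
        intro p q
        have : (fun s => (P s ^ 0) p q) = fun _ => (1 : Matrix (Fin n) (Fin n) ℝ) p q := by
          funext s; rw [pow_zero]
        rw [this]; exact differentiable_const _
    | succ i ih =>
        intro p q
        have : (fun s => (P s ^ (i + 1)) p q)
            = fun s => ∑ r, (P s ^ i) p r * P s r q := by
          funext s; rw [pow_succ, Matrix.mul_apply]
        rw [this]
        exact Differentiable.fun_sum fun r _ => (ih p r).mul (hP r q)
  have hTr : ∀ i, Differentiable ℝ fun s => ((P s) ^ i).trace := by
    intro i
    have : (fun s => ((P s) ^ i).trace) = fun s => ∑ x, (P s ^ i) x x := by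
      funext s; rfl
    rw [this]
    exact Differentiable.fun_sum fun x _ => hPowEntry i x x
  -- notation for values at t
  set a : ℕ → ℝ := fun i => sigmaInfMat (Y t) (P t) i with ha
  set τv : ℕ → ℝ := fun i => ((P t) ^ i).trace with hτv
  set τd : ℕ → ℝ := fun i => deriv (fun s => ((P s) ^ i).trace) t with hτd
  set y' : ℝ := deriv Y t with hy'
  set D : ℕ → ℝ := fun m => a m * y'
    + ∑ j ∈ Finset.range (m + 1), (-1 : ℝ) ^ j / ((j : ℝ) + 1) * a (m - j) * τd (j + 1) with hDdef
  set d : ℕ → ℝ := fun i => if i = 0 then 0 else D (i - 1) with hddef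
  have hNt : ∀ m : ℕ, ((m : ℝ) + 1) * a (m + 1)
      = Y t * a m + ∑ j ∈ Finset.range (m + 1), (-1 : ℝ) ^ j * τv (j + 1) * a (m - j) :=
    fun m => newton_sigmaInf (hsymm t) (Y t) m
  have key := key_algebra a τv τd (Y t) y' D (fun m => rfl) hNt
  -- main claim by strong induction
  have main : ∀ m : ℕ, HasDerivAt (fun s => sigmaInfMat (Y s) (P s) m) (d m) t := by
    intro m
    induction m using Nat.strong_induction_on with
    | _ m ih =>
      match m with
      | 0 =>
          have hfun : (fun s => sigmaInfMat (Y s) (P s) 0) = fun _ => (1 : ℝ) := by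
            funext s; exact sigmaInfMat_zero _ _
          rw [hfun, show d 0 = 0 from rfl]
          exact hasDerivAt_const t 1
      | (m + 1) =>
          have hm1 : ((m : ℝ) + 1) ≠ 0 := by positivity
          have hfun : (fun s => sigmaInfMat (Y s) (P s) (m + 1))
              = fun s => ((m : ℝ) + 1)⁻¹ * (Y s * sigmaInfMat (Y s) (P s) m
                  + ∑ j ∈ Finset.range (m + 1), (-1 : ℝ) ^ j * ((P s) ^ (j + 1)).trace
                      * sigmaInfMat (Y s) (P s) (m - j)) := by
            funext s
            rw [← newton_sigmaInf (hsymm s) (Y s) m, inv_mul_cancel_left₀ hm1]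
          have h1 : HasDerivAt (fun s => Y s * sigmaInfMat (Y s) (P s) m)
              (y' * a m + Y t * d m) t :=
            ((hY t).hasDerivAt).mul (ih m (by omega))
          have h2 : HasDerivAt
              (fun s => ∑ j ∈ Finset.range (m + 1), (-1 : ℝ) ^ j * ((P s) ^ (j + 1)).trace
                  * sigmaInfMat (Y s) (P s) (m - j))
              (∑ j ∈ Finset.range (m + 1),
                (((-1 : ℝ) ^ j * τd (j + 1)) * a (m - j)
                  + ((-1 : ℝ) ^ j * τv (j + 1)) * d (m - j))) t := by
            refine HasDerivAt.fun_sum fun j hj => ?_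
            have ht : HasDerivAt (fun s => (-1 : ℝ) ^ j * ((P s) ^ (j + 1)).trace)
                ((-1 : ℝ) ^ j * τd (j + 1)) t :=
              (((hTr (j + 1)) t).hasDerivAt).const_mul _
            exact ht.mul (ih (m - j) (by omega))
          have h3 := (h1.fun_add h2).const_mul (((m : ℝ) + 1)⁻¹)
          rw [hfun]
          refine h3.congr_deriv ?_
          -- identify the derivative values
          have hkey := key m
          have hsum : ∑ j ∈ Finset.range (m + 1),
              (-1 : ℝ) ^ j * (τd (j + 1) * a (m - j)
                + τv (j + 1) * (if m - j = 0 then 0 else D (m - j - 1)))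
              = ∑ j ∈ Finset.range (m + 1),
                (((-1 : ℝ) ^ j * τd (j + 1)) * a (m - j)
                  + ((-1 : ℝ) ^ j * τv (j + 1)) * d (m - j)) := by
            refine Finset.sum_congr rfl fun j hj => ?_
            rw [hddef]
            ring
          rw [hsum] at hkey
          have hdm1 : d (m + 1) = D m := rfl
          have hdm : (if m = 0 then 0 else D (m - 1)) = d m := by rw [hddef]
          rw [hdm] at hkey
          rw [hdm1]
          field_simp
          linarith [hkey]
  -- conclude
  have hfin := main k
  have hdk : d k = sigmaInfMat (Y t) (P t) (k - 1) * deriv Y t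
      + ∑ j ∈ Finset.range k, (-1 : ℝ) ^ j / ((j : ℝ) + 1) * sigmaInfMat (Y t) (P t) (k - 1 - j)
          * deriv (fun s => ((P s) ^ (j + 1)).trace) t := by
    simp only [hddef, hDdef, ha, hτd, hy']
    rw [if_neg (show ¬ k = 0 by omega), show k - 1 + 1 = k from by omega]
  rwa [hdk] at hfin
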